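/- (Proposition 2.2) Assume Condition 5 and conditions (B_{f(θ₀)}) and (B_{b(η₀)}). Then the observed estimating functions are unbiased at the true parameter: E[g_{n,1}^{obs}(θ₀)] = 0 and E[g_{n,2}^{obs}(η₀)] = 0 for every n ≥ 1. -/

import Mathlib

open MeasureTheory Filter Topology

noncomputable def indObs {Ω : Type*} (S : ℕ → ℕ → Ω → ℝ) (C : ℕ → Ω → ℝ)
    (i j : ℕ) (ω : Ω) : ℝ :=
  if S i j ω ≤ C i ω then 1 else 0

noncomputable def indCen {Ω : Type*} (S : ℕ → ℕ → Ω → ℝ) (C : ℕ → Ω → ℝ)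
    (i j : ℕ) (ω : Ω) : ℝ :=
  if S i (j - 1) ω < C i ω ∧ C i ω < S i j ω then 1 else 0

/-- The σ-field `𝓞(f_i) = σ( f_{ij} I^{cen}_{ij}, I^{cen}_{ij} (j ≥ 1) )` for a vector-valued
family `f`. -/
noncomputable def obsSigmaV {Ω : Type*} {p : ℕ} (S : ℕ → ℕ → Ω → ℝ) (C : ℕ → Ω → ℝ)
    (f : ℕ → ℕ → Ω → EuclideanSpace ℝ (Fin p)) (i : ℕ) : MeasurableSpace Ω :=
  ⨆ j : ℕ, ⨆ _ : 1 ≤ j,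
    (MeasurableSpace.comap (fun ω => indCen S C i j ω • f i j ω) inferInstance ⊔
      MeasurableSpace.comap (indCen S C i j) inferInstance)

/-- The σ-field `𝓞(b_i) = σ( b_{ij} I^{cen}_{ij}, I^{cen}_{ij} (j ≥ 1) )` for a scalar family
`b`. -/
noncomputable def obsSigmaS {Ω : Type*} (S : ℕ → ℕ → Ω → ℝ) (C : ℕ → Ω → ℝ)
    (b : ℕ → ℕ → Ω → ℝ) (i : ℕ) : MeasurableSpace Ω :=
  ⨆ j : ℕ, ⨆ _ : 1 ≤ j,
    (MeasurableSpace.comap (fun ω => indCen S C i j ω * b i j ω) inferInstance ⊔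
      MeasurableSpace.comap (indCen S C i j) inferInstance)

/-- The observed estimating function
`g_{n,1}^{obs}(θ₀) = ∑_{i=1}^n ∑_{j=1}^{τ_i} ( f_{ij} Z_{ij} I^{obs}_{ij}
  + f_{ij} I^{cen}_{ij} E[Z_{ij} I^{cen}_{ij}]/E[I^{cen}_{ij}] )`. -/
noncomputable def gObs1 {Ω : Type*} {m0 : MeasurableSpace Ω} (P : Measure Ω) {p : ℕ}
    (S : ℕ → ℕ → Ω → ℝ) (C : ℕ → Ω → ℝ)
    (f : ℕ → ℕ → Ω → EuclideanSpace ℝ (Fin p)) (Z : ℕ → ℕ → Ω → ℝ)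
    (τ : ℕ → Ω → ℕ) (n : ℕ) (ω : Ω) : EuclideanSpace ℝ (Fin p) :=
  ∑ i ∈ Finset.Icc 1 n, ∑ j ∈ Finset.Icc 1 (τ i ω),
    ((Z i j ω * indObs S C i j ω) • f i j ω +
      (indCen S C i j ω *
        ((∫ ω', Z i j ω' * indCen S C i j ω' ∂P) / ∫ ω', indCen S C i j ω' ∂P)) • f i j ω)

/-- The observed estimating function
`g_{n,2}^{obs}(η₀) = ∑_{i=1}^n ∑_{j=1}^{τ_i} ( b_{ij}(Z_{ij}² − σ₀²) I^{obs}_{ij}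
  + b_{ij} I^{cen}_{ij} E[(Z_{ij}² − σ₀²) I^{cen}_{ij}]/E[I^{cen}_{ij}] )`. -/
noncomputable def gObs2 {Ω : Type*} {m0 : MeasurableSpace Ω} (P : Measure Ω)
    (S : ℕ → ℕ → Ω → ℝ) (C : ℕ → Ω → ℝ)
    (b : ℕ → ℕ → Ω → ℝ) (Z : ℕ → ℕ → Ω → ℝ) (σ0 : ℝ)
    (τ : ℕ → Ω → ℕ) (n : ℕ) (ω : Ω) : ℝ :=
  ∑ i ∈ Finset.Icc 1 n, ∑ j ∈ Finset.Icc 1 (τ i ω),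
    (b i j ω * ((Z i j ω) ^ 2 - σ0 ^ 2) * indObs S C i j ω +
      b i j ω * indCen S C i j ω *
        ((∫ ω', ((Z i j ω') ^ 2 - σ0 ^ 2) * indCen S C i j ω' ∂P) /
          ∫ ω', indCen S C i j ω' ∂P))


set_option linter.unusedSectionVars false
set_option linter.unusedVariables false
set_option linter.unreachableTactic false
set_option linter.unnecessarySeqFocus false
set_option linter.unusedTactic false

section aux1
variable {Ω : Type*} {m0 : MeasurableSpace Ω} {P : Measure Ω} [IsProbabilityMeasure P]

lemma helper_int_mul_condexp {m : MeasurableSpace Ω} (hm : m ≤ m0) {g X : Ω → ℝ}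
    (hg : StronglyMeasurable[m] g) (hgX : Integrable (fun ω => g ω * X ω) P)
    (hX : Integrable X P) :
    ∫ ω, g ω * X ω ∂P = ∫ ω, g ω * (P[X|m]) ω ∂P := by
  have h := condExp_mul_of_stronglyMeasurable_left (μ := P) hg (by exact hgX) hX
  calc ∫ ω, g ω * X ω ∂P = ∫ ω, (P[fun ω => g ω * X ω|m]) ω ∂P := (integral_condExp hm).symm
    _ = ∫ ω, g ω * (P[X|m]) ω ∂P := integral_congr_ae (by exact h)

lemma helper_int_mul_eq_zero {m : MeasurableSpace Ω} (hm : m ≤ m0) {g X : Ω → ℝ}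
    (hg : StronglyMeasurable[m] g) (hgX : Integrable (fun ω => g ω * X ω) P)
    (hX : Integrable X P) (hXc : P[X|m] =ᵐ[P] fun _ => 0) :
    ∫ ω, g ω * X ω ∂P = 0 := by
  rw [helper_int_mul_condexp hm hg hgX hX]
  have h : (fun ω => g ω * (P[X|m]) ω) =ᵐ[P] fun _ => (0:ℝ) :=
    hXc.mono fun ω h => by simp [h]
  rw [integral_congr_ae h, integral_zero]

lemma helper_int_mul_eq_const_mul {mO : MeasurableSpace Ω} (hmO : mO ≤ m0) {g X : Ω → ℝ} {c : ℝ}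
    (hg : StronglyMeasurable[mO] g) (hgX : Integrable (fun ω => g ω * X ω) P)
    (hX : Integrable X P)
    (hgW : (fun ω => g ω * (P[X|mO]) ω) =ᵐ[P] fun ω => c * g ω) :
    ∫ ω, g ω * X ω ∂P = c * ∫ ω, g ω ∂P := by
  rw [helper_int_mul_condexp hmO hg hgX hX, integral_congr_ae hgW, integral_const_mul]


lemma helper_condexp_indicator {B : Set Ω} (hB : MeasurableSet B) {I : Ω → ℝ}
    (hIind : I = B.indicator (fun _ => (1:ℝ))) {X : Ω → ℝ} (hX : Integrable X P) :
    (fun ω => I ω * (P[X|MeasurableSpace.comap I inferInstance]) ω) =ᵐ[P]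
      (fun ω => I ω * ((∫ ω', X ω' * I ω' ∂P) / (∫ ω', I ω' ∂P))) := by
  have hIB : ∀ ω ∈ B, I ω = 1 := fun ω h => by simp [hIind, Set.indicator_of_mem h]
  have hInB : ∀ ω, ω ∉ B → I ω = 0 := fun ω h => by simp [hIind, Set.indicator_of_notMem h]
  have hImeas : Measurable I := by
    rw [hIind]; exact (measurable_const.indicator hB)
  have hm' : MeasurableSpace.comap I inferInstance ≤ m0 := hImeas.comap_le
  have hIint : ∫ ω, I ω ∂P = (P B).toReal := by
    rw [hIind, integral_indicator hB, setIntegral_const, smul_eq_mul, mul_one, measureReal_def]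
  have hBpre : B = I ⁻¹' {1} := by
    ext ω; by_cases h : ω ∈ B <;> simp [h, hIB, hInB]
  by_cases hPB : P B = 0
  · have hI0 : I =ᵐ[P] fun _ => (0:ℝ) := by
      refine (ae_iff).mpr (measure_mono_null ?_ hPB)
      intro ω hω
      by_contra h
      exact hω (hInB ω h)
    have h1 : (fun ω => I ω * (P[X|MeasurableSpace.comap I inferInstance]) ω) =ᵐ[P]
        fun _ => (0:ℝ) := hI0.mono fun ω h => by simp [h]
    have h2 : (fun ω => I ω * ((∫ ω', X ω' * I ω' ∂P) / (∫ ω', I ω' ∂P))) =ᵐ[P]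
        fun _ => (0:ℝ) := hI0.mono fun ω h => by simp [h]
    exact h1.trans h2.symm
  · have hBne : B.Nonempty := by
      rw [Set.nonempty_iff_ne_empty]; rintro rfl; exact hPB (measure_empty)
    obtain ⟨ω₀, hω₀⟩ := hBne
    have hWm : StronglyMeasurable[MeasurableSpace.comap I inferInstance]
        (P[X|MeasurableSpace.comap I inferInstance]) := stronglyMeasurable_condExp
    have hset : MeasurableSet[MeasurableSpace.comap I inferInstance]
        ((P[X|MeasurableSpace.comap I inferInstance]) ⁻¹'
          {(P[X|MeasurableSpace.comap I inferInstance]) ω₀}) :=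
      hWm.measurable (measurableSet_singleton _)
    obtain ⟨E, hE, hpre⟩ := hset
    have h1E : (1:ℝ) ∈ E := by
      have hmem : ω₀ ∈ (P[X|MeasurableSpace.comap I inferInstance]) ⁻¹'
          {(P[X|MeasurableSpace.comap I inferInstance]) ω₀} := by simp
      rw [← hpre] at hmem
      have := hIB ω₀ hω₀
      simpa [Set.mem_preimage, this] using hmem
    have hconst : ∀ ω ∈ B, (P[X|MeasurableSpace.comap I inferInstance]) ω =
        (P[X|MeasurableSpace.comap I inferInstance]) ω₀ := by
      intro ω hω
      have : ω ∈ I ⁻¹' E := by simp [Set.mem_preimage, hIB ω hω, h1E]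
      rw [hpre] at this
      simpa using this
    have hBm' : MeasurableSet[MeasurableSpace.comap I inferInstance] B :=
      ⟨{1}, measurableSet_singleton 1, hBpre.symm⟩
    have h2 : ∫ ω in B, (P[X|MeasurableSpace.comap I inferInstance]) ω ∂P =
        ∫ ω in B, X ω ∂P := setIntegral_condExp hm' hX hBm'
    have h3 : ∫ ω in B, (P[X|MeasurableSpace.comap I inferInstance]) ω ∂P =
        (P B).toReal * (P[X|MeasurableSpace.comap I inferInstance]) ω₀ := by
      rw [setIntegral_congr_fun hB hconst, setIntegral_const, smul_eq_mul, measureReal_def]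
    have h4 : ∫ ω in B, X ω ∂P = ∫ ω, X ω * I ω ∂P := by
      rw [← integral_indicator hB]
      congr 1
      funext ω
      by_cases h : ω ∈ B <;> simp [Set.indicator_apply, h, hIB, hInB]
    have ht0 : (P B).toReal ≠ 0 :=
      ENNReal.toReal_ne_zero.mpr ⟨hPB, measure_ne_top _ _⟩
    have hv : (P[X|MeasurableSpace.comap I inferInstance]) ω₀ =
        (∫ ω', X ω' * I ω' ∂P) / (∫ ω', I ω' ∂P) := by
      rw [hIint]
      rw [eq_div_iff ht0, ← h4, ← h2, h3]
      ring
    refine Eventually.of_forall fun ω => ?_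
    by_cases h : ω ∈ B
    · simp only []
      rw [hconst ω h, hv]
    · simp [hInB ω h]


lemma helper_key_term {m mO : MeasurableSpace Ω} (hm : m ≤ m0) (hmO : mO ≤ m0)
    {IA Iobs Icen g X : Ω → ℝ} {c : ℝ}
    (hsplit : ∀ ω, IA ω = Iobs ω + Icen ω)
    (hIAg : StronglyMeasurable[m] (fun ω => IA ω * g ω))
    (hX : Integrable X P) (hXc : P[X|m] =ᵐ[P] fun _ => 0)
    (hIAgX : Integrable (fun ω => IA ω * g ω * X ω) P)
    (hIcg : StronglyMeasurable[mO] (fun ω => Icen ω * g ω))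
    (hIcgInt : Integrable (fun ω => Icen ω * g ω) P)
    (hIcgX : Integrable (fun ω => Icen ω * g ω * X ω) P)
    (hW : (fun ω => Icen ω * (P[X|mO]) ω) =ᵐ[P] fun ω => Icen ω * c) :
    ∫ ω, (X ω * Iobs ω * g ω + Icen ω * g ω * c) ∂P = 0 := by
  have h1 : ∫ ω, IA ω * g ω * X ω ∂P = 0 :=
    helper_int_mul_eq_zero hm hIAg hIAgX hX hXc
  have hgW : (fun ω => Icen ω * g ω * (P[X|mO]) ω) =ᵐ[P]
      fun ω => c * (Icen ω * g ω) := hW.mono fun ω h => by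
    simp only
    calc Icen ω * g ω * (P[X|mO]) ω = g ω * (Icen ω * (P[X|mO]) ω) := by ring
      _ = g ω * (Icen ω * c) := by
            rw [show Icen ω * (P[X|mO]) ω = Icen ω * c from h]
      _ = c * (Icen ω * g ω) := by ring
  have h2 : ∫ ω, Icen ω * g ω * X ω ∂P = c * ∫ ω, Icen ω * g ω ∂P :=
    helper_int_mul_eq_const_mul hmO hIcg hIcgX hX hgW
  have heq : (fun ω => X ω * Iobs ω * g ω + Icen ω * g ω * c) =
      fun ω => (IA ω * g ω * X ω - Icen ω * g ω * X ω) + Icen ω * g ω * c := by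
    funext ω; rw [hsplit ω]; ring
  have hsub : Integrable (fun ω => IA ω * g ω * X ω - Icen ω * g ω * X ω) P := by
    exact hIAgX.sub hIcgX
  rw [heq, integral_add hsub (hIcgInt.mul_const c),
    integral_sub hIAgX hIcgX, h1, h2, integral_mul_const]
  ring

lemma helper_key_bound {mO : MeasurableSpace Ω} (hmO : mO ≤ m0) {Icen gn X : Ω → ℝ} {c : ℝ}
    (hgn : StronglyMeasurable[mO] (fun ω => Icen ω * gn ω))
    (hIcgInt : Integrable (fun ω => Icen ω * gn ω) P)
    (hIcgX : Integrable (fun ω => Icen ω * gn ω * X ω) P)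
    (hX : Integrable X P)
    (hW : (fun ω => Icen ω * (P[X|mO]) ω) =ᵐ[P] fun ω => Icen ω * c) :
    |c * ∫ ω, Icen ω * gn ω ∂P| ≤ ∫ ω, |Icen ω * gn ω * X ω| ∂P := by
  have hgW : (fun ω => Icen ω * gn ω * (P[X|mO]) ω) =ᵐ[P]
      fun ω => c * (Icen ω * gn ω) := hW.mono fun ω h => by
    simp only
    calc Icen ω * gn ω * (P[X|mO]) ω = gn ω * (Icen ω * (P[X|mO]) ω) := by ring
      _ = gn ω * (Icen ω * c) := by
            rw [show Icen ω * (P[X|mO]) ω = Icen ω * c from h]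
      _ = c * (Icen ω * gn ω) := by ring
  have h2 : ∫ ω, Icen ω * gn ω * X ω ∂P = c * ∫ ω, Icen ω * gn ω ∂P :=
    helper_int_mul_eq_const_mul hmO hgn hIcgX hX hgW
  rw [← h2]
  calc |∫ ω, Icen ω * gn ω * X ω ∂P| ≤ ∫ ω, ‖Icen ω * gn ω * X ω‖ ∂P := by
        rw [← Real.norm_eq_abs]
        exact norm_integral_le_integral_norm _
    _ = ∫ ω, |Icen ω * gn ω * X ω| ∂P := by simp only [Real.norm_eq_abs]

end aux1

section facts
variable {Ω : Type*} {S : ℕ → ℕ → Ω → ℝ} {C : ℕ → Ω → ℝ} {τ : ℕ → Ω → ℕ}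

/-- indicator of the event `S_{i,j-1} < C_i`. -/
noncomputable def indA (S : ℕ → ℕ → Ω → ℝ) (C : ℕ → Ω → ℝ) (i j : ℕ) (ω : Ω) : ℝ :=
  if S i (j - 1) ω < C i ω then 1 else 0

lemma fact_split (hSmono : ∀ i ω, StrictMono fun j => S i j ω)
    {i j : ℕ} (hj : 1 ≤ j) (ω : Ω) :
    indA S C i j ω = indObs S C i j ω + indCen S C i j ω := by
  have hlt : S i (j - 1) ω < S i j ω := hSmono i ω (by omega)
  unfold indA indObs indCen
  by_cases h1 : S i j ω ≤ C i ω
  · rw [if_pos (lt_of_lt_of_le hlt h1), if_pos h1,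
      if_neg (by push_neg; intro _; linarith)]
    norm_num
  · push_neg at h1
    rw [if_neg (not_le_of_gt h1)]
    by_cases h2 : S i (j - 1) ω < C i ω
    · rw [if_pos h2, if_pos ⟨h2, h1⟩]; norm_num
    · rw [if_neg h2, if_neg (by push_neg; intro h; exact absurd h h2)]
      norm_num

lemma fact_le_tau (hS0 : ∀ i ω, S i 0 ω = 0)
    (hSmono : ∀ i ω, StrictMono fun j => S i j ω)
    (hCpos : ∀ i ω, 0 < C i ω)
    (hτ : ∀ i ω, 1 ≤ τ i ω ∧ C i ω ≤ S i (τ i ω) ω ∧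
      ∀ j, 1 ≤ j → j < τ i ω → S i j ω < C i ω)
    {i j : ℕ} (hj : 1 ≤ j) (ω : Ω) :
    j ≤ τ i ω ↔ S i (j - 1) ω < C i ω := by
  constructor
  · intro h
    rcases Nat.eq_or_lt_of_le hj with h1 | h1
    · rw [← h1]; simpa [hS0 i ω] using hCpos i ω
    · exact (hτ i ω).2.2 (j-1) (by omega) (by omega)
  · intro h
    by_contra hc
    push_neg at hc
    have h1 : S i (τ i ω) ω ≤ S i (j-1) ω := (hSmono i ω).monotone (by omega)
    have := (hτ i ω).2.1
    linarith

lemma fact_tau_lt (hS0 : ∀ i ω, S i 0 ω = 0)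
    (hSmono : ∀ i ω, StrictMono fun j => S i j ω)
    (hCpos : ∀ i ω, 0 < C i ω)
    (hτ : ∀ i ω, 1 ≤ τ i ω ∧ C i ω ≤ S i (τ i ω) ω ∧
      ∀ j, 1 ≤ j → j < τ i ω → S i j ω < C i ω)
    {i j : ℕ} (hj : 1 ≤ j) (ω : Ω) (h : τ i ω < j) :
    indObs S C i j ω = 0 ∧ indCen S C i j ω = 0 := by
  have hA : ¬ S i (j - 1) ω < C i ω := by
    rw [← fact_le_tau hS0 hSmono hCpos hτ hj ω]; omega
  push_neg at hA
  have hlt : S i (j - 1) ω < S i j ω := hSmono i ω (by omega)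
  constructor
  · rw [indObs, if_neg (by push_neg; linarith)]
  · rw [indCen, if_neg (by push_neg; intro h'; linarith)]

lemma fact_cen_le (hS0 : ∀ i ω, S i 0 ω = 0)
    (hSmono : ∀ i ω, StrictMono fun j => S i j ω)
    (hCpos : ∀ i ω, 0 < C i ω)
    (hτ : ∀ i ω, 1 ≤ τ i ω ∧ C i ω ≤ S i (τ i ω) ω ∧
      ∀ j, 1 ≤ j → j < τ i ω → S i j ω < C i ω)
    {i j : ℕ} (hj : 1 ≤ j) (ω : Ω) :
    indCen S C i j ω ≤ (if τ i ω = j then (1:ℝ) else 0) := by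
  rw [indCen]
  by_cases h : S i (j - 1) ω < C i ω ∧ C i ω < S i j ω
  · rw [if_pos h]
    have h1 : j ≤ τ i ω := (fact_le_tau hS0 hSmono hCpos hτ hj ω).mpr h.1
    have h2 : ¬ j < τ i ω := fun hc => absurd ((hτ i ω).2.2 j hj hc) (by linarith [h.2])
    rw [if_pos (by omega)]
  · rw [if_neg h]
    split <;> norm_num

lemma fact_sum_indA (hS0 : ∀ i ω, S i 0 ω = 0)
    (hSmono : ∀ i ω, StrictMono fun j => S i j ω)
    (hCpos : ∀ i ω, 0 < C i ω)
    (hτ : ∀ i ω, 1 ≤ τ i ω ∧ C i ω ≤ S i (τ i ω) ω ∧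
      ∀ j, 1 ≤ j → j < τ i ω → S i j ω < C i ω)
    {i : ℕ} (N : ℕ) (ω : Ω) :
    ∑ j ∈ Finset.range N, (if 1 ≤ j then indA S C i j ω else 0) ≤ (τ i ω : ℝ) := by
  have h : ∀ j ∈ Finset.range N, (if 1 ≤ j then indA S C i j ω else 0) =
      (if j ∈ Finset.Icc 1 (τ i ω) then (1:ℝ) else 0) := by
    intro j _
    by_cases hj : 1 ≤ j
    · rw [if_pos hj, indA]
      by_cases hA : S i (j-1) ω < C i ω
      · rw [if_pos hA, if_pos (Finset.mem_Icc.mpr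
          ⟨hj, (fact_le_tau hS0 hSmono hCpos hτ hj ω).mpr hA⟩)]
      · rw [if_neg hA, if_neg (fun hc => hA ((fact_le_tau hS0 hSmono hCpos hτ hj ω).mp
          (Finset.mem_Icc.mp hc).2))]
    · rw [if_neg hj, if_neg (fun hc => hj (Finset.mem_Icc.mp hc).1)]
  rw [Finset.sum_congr rfl h, Finset.sum_ite_mem, Finset.sum_const, nsmul_eq_mul, mul_one]
  have h1 : (Finset.range N ∩ Finset.Icc 1 (τ i ω)).card ≤ (Finset.Icc 1 (τ i ω)).card :=
    Finset.card_le_card (Finset.inter_subset_right)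
  rw [Nat.card_Icc] at h1
  exact_mod_cast h1.trans (by omega)

end facts


lemma helper_summable_sum {s : Finset ℕ} {u : ℕ → ℕ → ℝ} (h : ∀ i ∈ s, Summable (u i)) :
    Summable (fun j => ∑ i ∈ s, u i j) := by
  classical
  induction s using Finset.induction with
  | empty => simpa using summable_zero
  | insert a s' hx ih =>
      simp only [Finset.sum_insert hx]
      exact (h a (Finset.mem_insert_self a s')).add
        (ih fun i hi => h i (Finset.mem_insert_of_mem hi))

lemma master_sum {Ω : Type*} {m0 : MeasurableSpace Ω} (P : Measure Ω) [IsProbabilityMeasure P]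
    {E : Type*} [NormedAddCommGroup E] [NormedSpace ℝ E] (τ : ℕ → Ω → ℕ)
    (T : ℕ → ℕ → Ω → E) (n : ℕ)
    (hT0 : ∀ i j ω, 1 ≤ j → τ i ω < j → T i j ω = 0)
    (hTint : ∀ i j, 1 ≤ j → Integrable (T i j) P)
    (hTzero : ∀ i j, 1 ≤ j → ∫ ω, T i j ω ∂P = 0)
    (u : ℕ → ℕ → ℝ)
    (hTu : ∀ i j, 1 ≤ j → ∫ ω, ‖T i j ω‖ ∂P ≤ u i j)
    (husum : ∀ i, ∃ K, ∀ N, ∑ j ∈ Finset.range N, (if 1 ≤ j then u i j else 0) ≤ K) :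
    ∫ ω, (∑ i ∈ Finset.Icc 1 n, ∑ j ∈ Finset.Icc 1 (τ i ω), T i j ω) ∂P = 0 := by
  classical
  set T' : ℕ → ℕ → Ω → E := fun i j ω => if 1 ≤ j then T i j ω else 0 with hT'def
  have hvanish : ∀ i (ω : Ω), ∀ j ∉ Finset.Icc 1 (τ i ω), T' i j ω = 0 := by
    intro i ω j hj
    by_cases h1 : 1 ≤ j
    · have h2 : τ i ω < j := by
        rcases Finset.mem_Icc.not.mp hj with h
        push_neg at h
        exact h h1
      simp only [hT'def, if_pos h1]
      exact hT0 i j ω h1 h2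
    · simp only [hT'def, if_neg h1]
  have hT'int : ∀ i j, Integrable (T' i j) P := by
    intro i j
    by_cases hj : 1 ≤ j
    · simpa only [hT'def, if_pos hj] using hTint i j hj
    · simp only [hT'def, if_neg hj]
      exact integrable_zero _ _ _
  have step1 : ∀ ω, (∑ i ∈ Finset.Icc 1 n, ∑ j ∈ Finset.Icc 1 (τ i ω), T i j ω) =
      ∑' j, ∑ i ∈ Finset.Icc 1 n, T' i j ω := by
    intro ω
    have hsummable : ∀ i ∈ Finset.Icc 1 n, Summable (fun j => T' i j ω) := fun i _ =>
      summable_of_ne_finset_zero (s := Finset.Icc 1 (τ i ω)) (hvanish i ω)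
    rw [Summable.tsum_finsetSum hsummable]
    refine Finset.sum_congr rfl fun i _ => ?_
    rw [tsum_eq_sum (hvanish i ω)]
    refine Finset.sum_congr rfl fun j hj => ?_
    simp only [hT'def, if_pos (Finset.mem_Icc.mp hj).1]
  have hFint : ∀ j, Integrable (fun ω => ∑ i ∈ Finset.Icc 1 n, T' i j ω) P :=
    fun j => integrable_finset_sum _ (fun i _ => hT'int i j)
  have hu0 : ∀ i j, 1 ≤ j → 0 ≤ u i j := fun i j hj =>
    (integral_nonneg (fun ω => norm_nonneg _)).trans (hTu i j hj)
  have husum' : ∀ i, Summable (fun j => if 1 ≤ j then u i j else 0) := by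
    intro i
    obtain ⟨K, hK⟩ := husum i
    refine summable_of_sum_range_le (fun j => ?_) hK
    by_cases hj : 1 ≤ j
    · simp only [if_pos hj]; exact hu0 i j hj
    · simp only [if_neg hj, le_refl]
  have hv : Summable (fun j => ∑ i ∈ Finset.Icc 1 n, (if 1 ≤ j then u i j else 0)) :=
    helper_summable_sum (fun i _ => husum' i)
  have hFsum : Summable (fun j => ∫ ω, ‖∑ i ∈ Finset.Icc 1 n, T' i j ω‖ ∂P) := by
    refine Summable.of_nonneg_of_le (fun j => integral_nonneg fun ω => norm_nonneg _)
      (fun j => ?_) hv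
    calc ∫ ω, ‖∑ i ∈ Finset.Icc 1 n, T' i j ω‖ ∂P
        ≤ ∫ ω, ∑ i ∈ Finset.Icc 1 n, ‖T' i j ω‖ ∂P := by
          refine integral_mono (hFint j).norm
            (integrable_finset_sum _ (fun i _ => (hT'int i j).norm)) ?_
          intro ω
          exact norm_sum_le _ _
      _ = ∑ i ∈ Finset.Icc 1 n, ∫ ω, ‖T' i j ω‖ ∂P :=
          integral_finset_sum _ (fun i _ => (hT'int i j).norm)
      _ ≤ ∑ i ∈ Finset.Icc 1 n, (if 1 ≤ j then u i j else 0) := by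
          refine Finset.sum_le_sum fun i _ => ?_
          by_cases hj : 1 ≤ j
          · simp only [hT'def, if_pos hj]
            exact hTu i j hj
          · simp only [hT'def, if_neg hj, norm_zero, integral_zero, le_refl]
  have key := integral_tsum_of_summable_integral_norm hFint hFsum
  have hzero : ∀ j, ∫ ω, ∑ i ∈ Finset.Icc 1 n, T' i j ω ∂P = 0 := by
    intro j
    rw [integral_finset_sum _ (fun i _ => hT'int i j)]
    refine Finset.sum_eq_zero fun i _ => ?_
    by_cases hj : 1 ≤ j
    · simp only [hT'def, if_pos hj]
      exact hTzero i j hj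
    · simp only [hT'def, if_neg hj, integral_zero]
  calc ∫ ω, (∑ i ∈ Finset.Icc 1 n, ∑ j ∈ Finset.Icc 1 (τ i ω), T i j ω) ∂P
      = ∫ ω, ∑' j, ∑ i ∈ Finset.Icc 1 n, T' i j ω ∂P := by
        refine integral_congr_ae (Eventually.of_forall fun ω => step1 ω)
    _ = ∑' j, ∫ ω, ∑ i ∈ Finset.Icc 1 n, T' i j ω ∂P := key.symm
    _ = 0 := by simp only [hzero, tsum_zero]


section aux2
variable {Ω : Type*} {m0 : MeasurableSpace Ω} {P : Measure Ω} [IsProbabilityMeasure P]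
lemma euclid_abs_le {p : ℕ} (x : EuclideanSpace ℝ (Fin p)) (k : Fin p) : |x k| ≤ ‖x‖ := by
  rw [EuclideanSpace.norm_eq, ← Real.sqrt_sq_eq_abs]
  apply Real.sqrt_le_sqrt
  calc x k ^ 2 = ‖x k‖ ^ 2 := by rw [Real.norm_eq_abs, sq_abs]
    _ ≤ ∑ i, ‖x i‖ ^ 2 := Finset.single_le_sum (f := fun i => ‖x i‖ ^ 2)
        (fun i _ => by positivity) (Finset.mem_univ k)


end aux2

theorem part1
    {Ω : Type*} {m0 : MeasurableSpace Ω} (P : Measure Ω) [IsProbabilityMeasure P]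
    {p : ℕ}
    (S : ℕ → ℕ → Ω → ℝ) (C : ℕ → Ω → ℝ)
    (f : ℕ → ℕ → Ω → EuclideanSpace ℝ (Fin p)) (Z : ℕ → ℕ → Ω → ℝ)
    (𝒢 : ℕ → Filtration ℕ m0) (τ : ℕ → Ω → ℕ)
    (hS0 : ∀ i ω, S i 0 ω = 0)
    (hSmono : ∀ i ω, StrictMono fun j => S i j ω)
    (hCpos : ∀ i ω, 0 < C i ω)
    (hSmeas : ∀ i j, Measurable (S i j))
    (hCmeas : ∀ i, Measurable (C i))
    (hτ : ∀ i ω, 1 ≤ τ i ω ∧ C i ω ≤ S i (τ i ω) ω ∧ ∀ j, 1 ≤ j → j < τ i ω → S i j ω < C i ω)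
    (hfmeas : ∀ i j, 1 ≤ j → StronglyMeasurable[𝒢 i (j - 1)] (f i j))
    (hZmeas : ∀ i j, 1 ≤ j → StronglyMeasurable[𝒢 i j] (Z i j))
    (hSC : ∀ i j, 1 ≤ j → MeasurableSet[𝒢 i (j - 1)] {ω | S i (j - 1) ω < C i ω})
    (hZcond : ∀ i j, 1 ≤ j → P[Z i j|𝒢 i (j - 1)] =ᵐ[P] fun _ => 0)
    (hZL2 : ∀ i j, 1 ≤ j → Integrable (fun ω => (Z i j ω) ^ 2) P)
    (hbd1 : ∀ i ω, BddAbove (Set.range fun j => ‖Z i j ω • f i j ω‖))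
    (hCond5a : ∀ i, Integrable (fun ω => (⨆ j, ‖Z i j ω • f i j ω‖) * (τ i ω : ℝ)) P)
    (hfcen : ∀ i j, 1 ≤ j → Integrable (fun ω => indCen S C i j ω • f i j ω) P)
    (hBf : ∀ i j, 1 ≤ j →
      (fun ω => indCen S C i j ω * (P[Z i j|obsSigmaV S C f i]) ω) =ᵐ[P]
        fun ω =>
          indCen S C i j ω *
            (P[Z i j|MeasurableSpace.comap (indCen S C i j) inferInstance]) ω) :
    ∀ n, 1 ≤ n → ∫ ω, gObs1 P S C f Z τ n ω ∂P = 0 := by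
  classical
  intro n _
  -- notation
  set c1 : ℕ → ℕ → ℝ := fun i j =>
    (∫ ω', Z i j ω' * indCen S C i j ω' ∂P) / (∫ ω', indCen S C i j ω' ∂P) with hc1
  set T : ℕ → ℕ → Ω → EuclideanSpace ℝ (Fin p) := fun i j ω =>
    (Z i j ω * indObs S C i j ω) • f i j ω + (indCen S C i j ω * c1 i j) • f i j ω with hT
  set Gi : ℕ → Ω → ℝ := fun i ω => (⨆ j, ‖Z i j ω • f i j ω‖) * (τ i ω : ℝ) with hGi
  set u : ℕ → ℕ → ℝ := fun i j => ∫ ω, indA S C i j ω * ‖Z i j ω • f i j ω‖ ∂P with hu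
  -- basic pointwise facts
  have hIobs01 : ∀ i j ω, indObs S C i j ω = 0 ∨ indObs S C i j ω = 1 := by
    intro i j ω; unfold indObs; split <;> simp
  have hIcen01 : ∀ i j ω, indCen S C i j ω = 0 ∨ indCen S C i j ω = 1 := by
    intro i j ω; unfold indCen; split <;> simp
  have hIA01 : ∀ i j ω, indA S C i j ω = 0 ∨ indA S C i j ω = 1 := by
    intro i j ω; unfold indA; split <;> simp
  have hnrm_sup : ∀ i j ω, ‖Z i j ω • f i j ω‖ ≤ ⨆ j, ‖Z i j ω • f i j ω‖ :=
    fun i j ω => le_ciSup (hbd1 i ω) j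
  have hsup_nonneg : ∀ i ω, 0 ≤ ⨆ j, ‖Z i j ω • f i j ω‖ :=
    fun i ω => (norm_nonneg _).trans (hnrm_sup i 0 ω)
  have htau1 : ∀ i ω, (1:ℝ) ≤ (τ i ω : ℝ) := by
    intro i ω; exact_mod_cast (hτ i ω).1
  have hGi_nonneg : ∀ i ω, 0 ≤ Gi i ω := fun i ω =>
    mul_nonneg (hsup_nonneg i ω) (by positivity)
  have hnrm_Gi : ∀ i j ω, ‖Z i j ω • f i j ω‖ ≤ Gi i ω := by
    intro i j ω
    calc ‖Z i j ω • f i j ω‖ ≤ ⨆ j, ‖Z i j ω • f i j ω‖ := hnrm_sup i j ω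
      _ = (⨆ j, ‖Z i j ω • f i j ω‖) * 1 := (mul_one _).symm
      _ ≤ Gi i ω := by
          rw [hGi]
          exact mul_le_mul_of_nonneg_left (htau1 i ω) (hsup_nonneg i ω)
  -- measurability
  have hZm : ∀ i j, 1 ≤ j → Measurable (Z i j) := fun i j hj =>
    ((hZmeas i j hj).mono ((𝒢 i).le j)).measurable
  have hfm : ∀ i j, 1 ≤ j → StronglyMeasurable (f i j) := fun i j hj =>
    (hfmeas i j hj).mono ((𝒢 i).le (j - 1))
  have hIobsM : ∀ i j, Measurable (indObs S C i j) := by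
    intro i j
    exact Measurable.ite (measurableSet_le (hSmeas i j) (hCmeas i))
      measurable_const measurable_const
  have hcenSet : ∀ i j, MeasurableSet {ω | S i (j-1) ω < C i ω ∧ C i ω < S i j ω} := by
    intro i j
    rw [Set.setOf_and]
    exact (measurableSet_lt (hSmeas i (j-1)) (hCmeas i)).inter
      (measurableSet_lt (hCmeas i) (hSmeas i j))
  have hIcenM : ∀ i j, Measurable (indCen S C i j) := by
    intro i j
    exact Measurable.ite (hcenSet i j) measurable_const measurable_const
  have hIAM : ∀ i j, Measurable (indA S C i j) := by
    intro i j
    exact Measurable.ite (measurableSet_lt (hSmeas i (j-1)) (hCmeas i))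
      measurable_const measurable_const
  -- integrability of Z
  have hZint : ∀ i j, 1 ≤ j → Integrable (Z i j) P := by
    intro i j hj
    refine Integrable.mono' ((integrable_const (1:ℝ)).add (hZL2 i j hj))
      (hZm i j hj).aestronglyMeasurable (Eventually.of_forall fun ω => ?_)
    rw [Real.norm_eq_abs, Pi.add_apply]
    nlinarith [sq_nonneg (|Z i j ω| - 1), sq_abs (Z i j ω)]
  -- obsSigma facts
  have hOle : ∀ i, obsSigmaV S C f i ≤ m0 := by
    intro i
    refine iSup_le fun j => iSup_le fun hj => sup_le ?_ ?_
    · exact Measurable.comap_le ((hIcenM i j).smul (hfm i j hj).measurable)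
    · exact (hIcenM i j).comap_le
  have hOsm_vec : ∀ i j, 1 ≤ j →
      StronglyMeasurable[obsSigmaV S C f i] (fun ω => indCen S C i j ω • f i j ω) := by
    intro i j hj
    have hle : MeasurableSpace.comap (fun ω => indCen S C i j ω • f i j ω)
        inferInstance ≤ obsSigmaV S C f i := by
      refine le_trans le_sup_left (le_trans (le_iSup (fun _ : 1 ≤ j =>
        (MeasurableSpace.comap (fun ω => indCen S C i j ω • f i j ω) inferInstance ⊔
          MeasurableSpace.comap (indCen S C i j) inferInstance)) hj) ?_)
      exact le_iSup (fun j => ⨆ _ : 1 ≤ j,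
        (MeasurableSpace.comap (fun ω => indCen S C i j ω • f i j ω) inferInstance ⊔
          MeasurableSpace.comap (indCen S C i j) inferInstance)) j
    exact (Measurable.mono (measurable_iff_comap_le.mpr le_rfl) hle le_rfl).stronglyMeasurable
  have hOsm_k : ∀ i j (k : Fin p), 1 ≤ j →
      StronglyMeasurable[obsSigmaV S C f i] (fun ω => indCen S C i j ω * f i j ω k) := by
    intro i j k hj
    have h1 := ((EuclideanSpace.proj (𝕜 := ℝ) k).continuous.measurable.comp (hOsm_vec i j hj).measurable)
    exact h1.stronglyMeasurable
  have hcen_nrm_eq : ∀ i j ω, ‖indCen S C i j ω • f i j ω‖ =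
      indCen S C i j ω * ‖f i j ω‖ := by
    intro i j ω
    rcases hIcen01 i j ω with h | h <;> rw [h] <;> simp
  have hOsm_nrm : ∀ i j, 1 ≤ j →
      StronglyMeasurable[obsSigmaV S C f i] (fun ω => indCen S C i j ω * ‖f i j ω‖) := by
    intro i j hj
    have heq : (fun ω => indCen S C i j ω * ‖f i j ω‖) =
        fun ω => ‖indCen S C i j ω • f i j ω‖ := funext fun ω => (hcen_nrm_eq i j ω).symm
    rw [heq]
    exact (hOsm_vec i j hj).norm
  -- conditional expectation chain
  have hW : ∀ i j, 1 ≤ j →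
      (fun ω => indCen S C i j ω * (P[Z i j|obsSigmaV S C f i]) ω) =ᵐ[P]
        fun ω => indCen S C i j ω * c1 i j := by
    intro i j hj
    have hIind : indCen S C i j =
        ({ω | S i (j-1) ω < C i ω ∧ C i ω < S i j ω} : Set Ω).indicator (fun _ => (1:ℝ)) := by
      funext ω
      by_cases h : S i (j-1) ω < C i ω ∧ C i ω < S i j ω
      · rw [indCen, if_pos h]
        exact (Set.indicator_of_mem
          (s := {ω | S i (j-1) ω < C i ω ∧ C i ω < S i j ω}) (a := ω)
          h (fun _ => (1:ℝ))).symm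
      · rw [indCen, if_neg h]
        exact (Set.indicator_of_notMem
          (s := {ω | S i (j-1) ω < C i ω ∧ C i ω < S i j ω}) (a := ω)
          (fun hc => h hc) (fun _ => (1:ℝ))).symm
    exact (hBf i j hj).trans (helper_condexp_indicator (hcenSet i j) hIind (hZint i j hj))
  -- component bounds
  have hcomp_bd : ∀ i j ω (k : Fin p), |f i j ω k * Z i j ω| ≤ ‖Z i j ω • f i j ω‖ := by
    intro i j ω k
    rw [abs_mul]
    calc |f i j ω k| * |Z i j ω| ≤ ‖f i j ω‖ * |Z i j ω| :=
          mul_le_mul_of_nonneg_right (euclid_abs_le _ k) (abs_nonneg _)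
      _ = ‖Z i j ω • f i j ω‖ := by
          rw [norm_smul, Real.norm_eq_abs]; ring
  have hbound_gen : ∀ i j (k : Fin p) (ω : Ω) (a : ℝ), (a = 0 ∨ a = 1) →
      ‖a * f i j ω k * Z i j ω‖ ≤ (⨆ j, ‖Z i j ω • f i j ω‖) * (τ i ω : ℝ) := by
    intro i j k ω a ha
    have h01 : |a| ≤ 1 := by rcases ha with h|h <;> simp [h]
    calc ‖a * f i j ω k * Z i j ω‖ = |a| * |f i j ω k * Z i j ω| := by
          rw [Real.norm_eq_abs, mul_assoc, abs_mul]
      _ ≤ 1 * |f i j ω k * Z i j ω| := mul_le_mul_of_nonneg_right h01 (abs_nonneg _)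
      _ = |f i j ω k * Z i j ω| := one_mul _
      _ ≤ ‖Z i j ω • f i j ω‖ := hcomp_bd i j ω k
      _ ≤ (⨆ j, ‖Z i j ω • f i j ω‖) * (τ i ω : ℝ) := hnrm_Gi i j ω
  -- integrability batch
  have hIAgX : ∀ i j (k : Fin p), 1 ≤ j →
      Integrable (fun ω => indA S C i j ω * f i j ω k * Z i j ω) P := by
    intro i j k hj
    refine Integrable.mono' (hCond5a i)
      (((hIAM i j).mul (((EuclideanSpace.proj (𝕜 := ℝ) k).continuous.measurable.comp (hfm i j hj).measurable).mul
        (hZm i j hj))).aestronglyMeasurable.congr ?_) (Eventually.of_forall fun ω => ?_)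
    · exact Eventually.of_forall fun ω => by simp only [Pi.mul_apply, Function.comp_apply]; exact (mul_assoc _ _ _).symm
    · exact hbound_gen i j k ω _ (hIA01 i j ω)
  have hIcgX : ∀ i j (k : Fin p), 1 ≤ j →
      Integrable (fun ω => indCen S C i j ω * f i j ω k * Z i j ω) P := by
    intro i j k hj
    refine Integrable.mono' (hCond5a i)
      (((hIcenM i j).mul (((EuclideanSpace.proj (𝕜 := ℝ) k).continuous.measurable.comp (hfm i j hj).measurable).mul
        (hZm i j hj))).aestronglyMeasurable.congr ?_) (Eventually.of_forall fun ω => ?_)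
    · exact Eventually.of_forall fun ω => by simp only [Pi.mul_apply, Function.comp_apply]; exact (mul_assoc _ _ _).symm
    · exact hbound_gen i j k ω _ (hIcen01 i j ω)
  have hIcg_int : ∀ i j (k : Fin p), 1 ≤ j →
      Integrable (fun ω => indCen S C i j ω * f i j ω k) P := by
    intro i j k hj
    refine Integrable.mono' (hfcen i j hj).norm
      (((hIcenM i j).mul ((EuclideanSpace.proj (𝕜 := ℝ) k).continuous.measurable.comp
        (hfm i j hj).measurable)).aestronglyMeasurable) (Eventually.of_forall fun ω => ?_)
    rw [Real.norm_eq_abs, abs_mul, hcen_nrm_eq]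
    rcases hIcen01 i j ω with h | h <;> rw [h]
    · simp
    · simpa using euclid_abs_le (f i j ω) k
  have hIcen_fnrm : ∀ i j, 1 ≤ j →
      Integrable (fun ω => indCen S C i j ω * ‖f i j ω‖) P := by
    intro i j hj
    exact (hfcen i j hj).norm.congr (Eventually.of_forall fun ω => hcen_nrm_eq i j ω)
  have hIcen_fnrmX : ∀ i j, 1 ≤ j →
      Integrable (fun ω => indCen S C i j ω * ‖f i j ω‖ * Z i j ω) P := by
    intro i j hj
    refine Integrable.mono' (hCond5a i)
      (((hIcenM i j).mul (hfm i j hj).norm.measurable).mul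
        (hZm i j hj)).aestronglyMeasurable (Eventually.of_forall fun ω => ?_)
    rw [Real.norm_eq_abs, abs_mul, abs_mul]
    rcases hIcen01 i j ω with h | h <;> rw [h]
    · simpa using hGi_nonneg i ω
    · have heq2 : ‖f i j ω‖ * |Z i j ω| = ‖Z i j ω • f i j ω‖ := by
        rw [norm_smul, Real.norm_eq_abs]; ring
      simp only [abs_norm, one_mul, abs_one]
      rw [heq2]
      exact hnrm_Gi i j ω
  -- strongly measurable for the filtration
  have hIA_sm : ∀ i j (k : Fin p), 1 ≤ j →
      StronglyMeasurable[𝒢 i (j-1)] (fun ω => indA S C i j ω * f i j ω k) := by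
    intro i j k hj
    have h1 : StronglyMeasurable[𝒢 i (j-1)] (indA S C i j) := by
      have heq : indA S C i j =
          ({ω | S i (j-1) ω < C i ω} : Set Ω).indicator (fun _ => (1:ℝ)) := by
        funext ω
        by_cases h : S i (j-1) ω < C i ω
        · rw [indA, if_pos h]
          exact (Set.indicator_of_mem (s := {ω | S i (j-1) ω < C i ω}) (a := ω)
            h (fun _ => (1:ℝ))).symm
        · rw [indA, if_neg h]
          exact (Set.indicator_of_notMem (s := {ω | S i (j-1) ω < C i ω}) (a := ω)
            (fun hc => h hc) (fun _ => (1:ℝ))).symm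
      rw [heq]
      exact stronglyMeasurable_const.indicator (hSC i j hj)
    exact h1.mul ((EuclideanSpace.proj (𝕜 := ℝ) k).continuous.comp_stronglyMeasurable
      (hfmeas i j hj))
  -- per-term integrability
  have hTint : ∀ i j, 1 ≤ j → Integrable (T i j) P := by
    intro i j hj
    have hA : Integrable (fun ω => (Z i j ω * indObs S C i j ω) • f i j ω) P := by
      refine Integrable.mono' (hCond5a i)
        (((hZm i j hj).mul (hIobsM i j)).stronglyMeasurable.smul
          (hfm i j hj)).aestronglyMeasurable (Eventually.of_forall fun ω => ?_)
      rw [norm_smul, Real.norm_eq_abs, abs_mul]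
      rcases hIobs01 i j ω with h | h <;> rw [h]
      · simpa using hGi_nonneg i ω
      · have heq1 : |Z i j ω| * |(1:ℝ)| * ‖f i j ω‖ = ‖Z i j ω • f i j ω‖ := by
          rw [norm_smul, Real.norm_eq_abs, abs_one]; ring
        rw [heq1]
        exact hnrm_Gi i j ω
    have hB : Integrable (fun ω => (indCen S C i j ω * c1 i j) • f i j ω) P := by
      have heq : (fun ω => (indCen S C i j ω * c1 i j) • f i j ω) =
          fun ω => c1 i j • (indCen S C i j ω • f i j ω) := by
        funext ω; rw [smul_smul, mul_comm]
      rw [heq]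
      exact (hfcen i j hj).smul (c1 i j)
    exact hA.add hB
  -- per-term zero integral
  have hTzero : ∀ i j, 1 ≤ j → ∫ ω, T i j ω ∂P = 0 := by
    intro i j hj
    have hcomp : ∀ k : Fin p, ∫ ω, T i j ω k ∂P = 0 := by
      intro k
      have heq : (fun ω => T i j ω k) =
          fun ω => Z i j ω * indObs S C i j ω * f i j ω k +
            indCen S C i j ω * f i j ω k * c1 i j := by
        funext ω
        show (Z i j ω * indObs S C i j ω) * f i j ω k +
          (indCen S C i j ω * c1 i j) * f i j ω k = _
        ring
      rw [heq]
      exact helper_key_term ((𝒢 i).le (j-1)) (hOle i)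
        (fun ω => fact_split hSmono hj ω)
        (hIA_sm i j k hj) (hZint i j hj) (hZcond i j hj)
        (hIAgX i j k hj) (hOsm_k i j k hj) (hIcg_int i j k hj) (hIcgX i j k hj)
        (hW i j hj)
    have hTk : ∀ k : Fin p, (∫ ω, T i j ω ∂P) k = 0 := by
      intro k
      have h2 : (∫ ω, T i j ω ∂P) k = ∫ ω, T i j ω k ∂P :=
        ((EuclideanSpace.proj (𝕜 := ℝ) k).integral_comp_comm (hTint i j hj)).symm
      rw [h2]
      exact hcomp k
    ext k
    exact hTk k
  -- more integrability
  have hnrmM : ∀ i j, 1 ≤ j → StronglyMeasurable (fun ω => ‖Z i j ω • f i j ω‖) :=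
    fun i j hj => ((hZm i j hj).stronglyMeasurable.smul (hfm i j hj)).norm
  have hIobs_nonneg : ∀ i j ω, 0 ≤ indObs S C i j ω := by
    intro i j ω; rcases hIobs01 i j ω with h|h <;> rw [h] <;> norm_num
  have hIcen_nonneg : ∀ i j ω, 0 ≤ indCen S C i j ω := by
    intro i j ω; rcases hIcen01 i j ω with h|h <;> rw [h] <;> norm_num
  have hIA_nonneg : ∀ i j ω, 0 ≤ indA S C i j ω := by
    intro i j ω; rcases hIA01 i j ω with h|h <;> rw [h] <;> norm_num
  have hind_nrm_int : ∀ (I : ℕ → ℕ → Ω → ℝ), (∀ i j, Measurable (I i j)) →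
      (∀ i j ω, I i j ω = 0 ∨ I i j ω = 1) → ∀ i j, 1 ≤ j →
      Integrable (fun ω => I i j ω * ‖Z i j ω • f i j ω‖) P := by
    intro I hIM hI01 i j hj
    refine Integrable.mono' (hCond5a i)
      ((hIM i j).stronglyMeasurable.mul (hnrmM i j hj)).aestronglyMeasurable
      (Eventually.of_forall fun ω => ?_)
    rw [Real.norm_eq_abs, abs_mul, abs_norm]
    rcases hI01 i j ω with h|h <;> rw [h]
    · simpa using hGi_nonneg i ω
    · rw [abs_one, one_mul]
      exact hnrm_Gi i j ω
  have hIobs_nrm := hind_nrm_int _ hIobsM hIobs01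
  have hIcen_nrm := hind_nrm_int _ hIcenM hIcen01
  have hIA_nrm := hind_nrm_int _ hIAM hIA01
  -- the norm bound on each term
  have hTu : ∀ i j, 1 ≤ j → ∫ ω, ‖T i j ω‖ ∂P ≤ u i j := by
    intro i j hj
    have hptw : ∀ ω, ‖T i j ω‖ ≤ indObs S C i j ω * ‖Z i j ω • f i j ω‖ +
        |c1 i j| * (indCen S C i j ω * ‖f i j ω‖) := by
      intro ω
      have e1 : ‖(Z i j ω * indObs S C i j ω) • f i j ω‖ =
          indObs S C i j ω * ‖Z i j ω • f i j ω‖ := by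
        rw [norm_smul, Real.norm_eq_abs, abs_mul, norm_smul, Real.norm_eq_abs]
        rcases hIobs01 i j ω with h|h <;> rw [h] <;> simp <;> ring
      have e2 : ‖(indCen S C i j ω * c1 i j) • f i j ω‖ =
          |c1 i j| * (indCen S C i j ω * ‖f i j ω‖) := by
        rw [norm_smul, Real.norm_eq_abs, abs_mul]
        rcases hIcen01 i j ω with h|h <;> rw [h] <;> simp <;> ring
      calc ‖T i j ω‖ ≤ ‖(Z i j ω * indObs S C i j ω) • f i j ω‖ +
          ‖(indCen S C i j ω * c1 i j) • f i j ω‖ := norm_add_le _ _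
        _ = _ := by rw [e1, e2]
    have hint2 : Integrable (fun ω => indObs S C i j ω * ‖Z i j ω • f i j ω‖ +
        |c1 i j| * (indCen S C i j ω * ‖f i j ω‖)) P :=
      (hIobs_nrm i j hj).add ((hIcen_fnrm i j hj).const_mul _)
    have hb1 : |c1 i j| * ∫ ω, indCen S C i j ω * ‖f i j ω‖ ∂P ≤
        ∫ ω, indCen S C i j ω * ‖Z i j ω • f i j ω‖ ∂P := by
      have h5 := helper_key_bound (hOle i) (hOsm_nrm i j hj) (hIcen_fnrm i j hj)
        (hIcen_fnrmX i j hj) (hZint i j hj) (hW i j hj)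
      have h6 : |c1 i j| * ∫ ω, indCen S C i j ω * ‖f i j ω‖ ∂P =
          |c1 i j * ∫ ω, indCen S C i j ω * ‖f i j ω‖ ∂P| := by
        rw [abs_mul, abs_of_nonneg (integral_nonneg fun ω =>
          mul_nonneg (hIcen_nonneg i j ω) (norm_nonneg _))]
      have h7 : ∫ ω, |indCen S C i j ω * ‖f i j ω‖ * Z i j ω| ∂P =
          ∫ ω, indCen S C i j ω * ‖Z i j ω • f i j ω‖ ∂P := by
        refine integral_congr_ae (Eventually.of_forall fun ω => ?_)
        show |indCen S C i j ω * ‖f i j ω‖ * Z i j ω| =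
          indCen S C i j ω * ‖Z i j ω • f i j ω‖
        rw [abs_mul, abs_mul, abs_norm, norm_smul, Real.norm_eq_abs]
        rcases hIcen01 i j ω with h|h <;> rw [h] <;> simp <;> ring
      rw [h6, ← h7]
      exact h5
    calc ∫ ω, ‖T i j ω‖ ∂P
        ≤ ∫ ω, (indObs S C i j ω * ‖Z i j ω • f i j ω‖ +
            |c1 i j| * (indCen S C i j ω * ‖f i j ω‖)) ∂P :=
          integral_mono (hTint i j hj).norm hint2 hptw
      _ = (∫ ω, indObs S C i j ω * ‖Z i j ω • f i j ω‖ ∂P) +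
            |c1 i j| * ∫ ω, indCen S C i j ω * ‖f i j ω‖ ∂P := by
          rw [integral_add (hIobs_nrm i j hj) ((hIcen_fnrm i j hj).const_mul _),
            integral_const_mul]
      _ ≤ (∫ ω, indObs S C i j ω * ‖Z i j ω • f i j ω‖ ∂P) +
            ∫ ω, indCen S C i j ω * ‖Z i j ω • f i j ω‖ ∂P := by
          exact add_le_add le_rfl hb1
      _ = ∫ ω, (indObs S C i j ω * ‖Z i j ω • f i j ω‖ +
            indCen S C i j ω * ‖Z i j ω • f i j ω‖) ∂P :=
          (integral_add (hIobs_nrm i j hj) (hIcen_nrm i j hj)).symm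
      _ = u i j := by
          rw [hu]
          refine integral_congr_ae (Eventually.of_forall fun ω => ?_)
          show indObs S C i j ω * ‖Z i j ω • f i j ω‖ +
            indCen S C i j ω * ‖Z i j ω • f i j ω‖ = indA S C i j ω * ‖Z i j ω • f i j ω‖
          rw [fact_split hSmono hj ω]
          ring
  -- summability of the bounds
  have husum : ∀ i, ∃ K, ∀ N,
      ∑ j ∈ Finset.range N, (if 1 ≤ j then u i j else 0) ≤ K := by
    intro i
    refine ⟨∫ ω, Gi i ω ∂P, fun N => ?_⟩
    have hjint : ∀ j, Integrable
        (fun ω => if 1 ≤ j then indA S C i j ω * ‖Z i j ω • f i j ω‖ else 0) P := by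
      intro j
      by_cases hj : 1 ≤ j
      · simp only [if_pos hj]; exact hIA_nrm i j hj
      · simp only [if_neg hj]; exact integrable_zero _ _ _
    calc ∑ j ∈ Finset.range N, (if 1 ≤ j then u i j else 0)
        = ∑ j ∈ Finset.range N,
            ∫ ω, (if 1 ≤ j then indA S C i j ω * ‖Z i j ω • f i j ω‖ else 0) ∂P := by
          refine Finset.sum_congr rfl fun j _ => ?_
          by_cases hj : 1 ≤ j
          · simp only [if_pos hj, hu]
          · simp only [if_neg hj, integral_zero]
      _ = ∫ ω, ∑ j ∈ Finset.range N,
            (if 1 ≤ j then indA S C i j ω * ‖Z i j ω • f i j ω‖ else 0) ∂P :=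
          (integral_finset_sum _ (fun j _ => hjint j)).symm
      _ ≤ ∫ ω, Gi i ω ∂P := by
          refine integral_mono (integrable_finset_sum _ (fun j _ => hjint j))
            (hCond5a i) (fun ω => ?_)
          calc ∑ j ∈ Finset.range N,
              (if 1 ≤ j then indA S C i j ω * ‖Z i j ω • f i j ω‖ else 0)
              ≤ ∑ j ∈ Finset.range N,
                (if 1 ≤ j then indA S C i j ω else 0) * (⨆ j, ‖Z i j ω • f i j ω‖) := by
                refine Finset.sum_le_sum fun j _ => ?_
                by_cases hj : 1 ≤ j
                · simp only [if_pos hj]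
                  exact mul_le_mul_of_nonneg_left (hnrm_sup i j ω) (hIA_nonneg i j ω)
                · simp only [if_neg hj, zero_mul, le_refl]
            _ = (∑ j ∈ Finset.range N, (if 1 ≤ j then indA S C i j ω else 0)) *
                (⨆ j, ‖Z i j ω • f i j ω‖) := by rw [Finset.sum_mul]
            _ ≤ (τ i ω : ℝ) * (⨆ j, ‖Z i j ω • f i j ω‖) :=
                mul_le_mul_of_nonneg_right (fact_sum_indA hS0 hSmono hCpos hτ N ω)
                  (hsup_nonneg i ω)
            _ = Gi i ω := by rw [hGi]; ring
  -- vanishing beyond τ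
  have hT0 : ∀ i j ω, 1 ≤ j → τ i ω < j → T i j ω = 0 := by
    intro i j ω hj h
    obtain ⟨h1, h2⟩ := fact_tau_lt hS0 hSmono hCpos hτ hj ω h
    rw [hT]
    simp only [h1, h2, mul_zero, zero_mul, zero_smul, add_zero]
  have hmain := master_sum P τ T n hT0 hTint hTzero u hTu husum
  have hrw : ∀ ω, gObs1 P S C f Z τ n ω =
      ∑ i ∈ Finset.Icc 1 n, ∑ j ∈ Finset.Icc 1 (τ i ω), T i j ω := by
    intro ω
    rw [hT, hc1]
    rfl
  calc ∫ ω, gObs1 P S C f Z τ n ω ∂P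
      = ∫ ω, ∑ i ∈ Finset.Icc 1 n, ∑ j ∈ Finset.Icc 1 (τ i ω), T i j ω ∂P :=
        integral_congr_ae (Eventually.of_forall hrw)
    _ = 0 := hmain


theorem part2
    {Ω : Type*} {m0 : MeasurableSpace Ω} (P : Measure Ω) [IsProbabilityMeasure P]
    (S : ℕ → ℕ → Ω → ℝ) (C : ℕ → Ω → ℝ)
    (b : ℕ → ℕ → Ω → ℝ) (Z : ℕ → ℕ → Ω → ℝ) (σ0 : ℝ)
    (𝒢 : ℕ → Filtration ℕ m0) (τ : ℕ → Ω → ℕ)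
    (hS0 : ∀ i ω, S i 0 ω = 0)
    (hSmono : ∀ i ω, StrictMono fun j => S i j ω)
    (hCpos : ∀ i ω, 0 < C i ω)
    (hSmeas : ∀ i j, Measurable (S i j))
    (hCmeas : ∀ i, Measurable (C i))
    (hτ : ∀ i ω, 1 ≤ τ i ω ∧ C i ω ≤ S i (τ i ω) ω ∧ ∀ j, 1 ≤ j → j < τ i ω → S i j ω < C i ω)
    (hbmeas : ∀ i j, 1 ≤ j → StronglyMeasurable[𝒢 i (j - 1)] (b i j))
    (hZmeas : ∀ i j, 1 ≤ j → StronglyMeasurable[𝒢 i j] (Z i j))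
    (hSC : ∀ i j, 1 ≤ j → MeasurableSet[𝒢 i (j - 1)] {ω | S i (j - 1) ω < C i ω})
    (hZ2cond : ∀ i j, 1 ≤ j → P[fun ω => (Z i j ω) ^ 2|𝒢 i (j - 1)] =ᵐ[P] fun _ => σ0 ^ 2)
    (hZL2 : ∀ i j, 1 ≤ j → Integrable (fun ω => (Z i j ω) ^ 2) P)
    (hbd2 : ∀ i ω, BddAbove (Set.range fun j => |b i j ω * ((Z i j ω) ^ 2 - σ0 ^ 2)|))
    (hCond5b : ∀ i,
      Integrable (fun ω => (⨆ j, |b i j ω * ((Z i j ω) ^ 2 - σ0 ^ 2)|) * (τ i ω : ℝ)) P)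
    (hbcen : ∀ i j, 1 ≤ j → Integrable (fun ω => b i j ω * indCen S C i j ω) P)
    (hBb : ∀ i j, 1 ≤ j →
      (fun ω => indCen S C i j ω * (P[fun ω' => (Z i j ω') ^ 2|obsSigmaS S C b i]) ω) =ᵐ[P]
        fun ω =>
          indCen S C i j ω *
            (P[fun ω' => (Z i j ω') ^ 2|
              MeasurableSpace.comap (indCen S C i j) inferInstance]) ω) :
    ∀ n, 1 ≤ n → ∫ ω, gObs2 P S C b Z σ0 τ n ω ∂P = 0 := by
  classical
  intro n _
  set Q : ℕ → ℕ → Ω → ℝ := fun i j ω => (Z i j ω) ^ 2 - σ0 ^ 2 with hQ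
  set c2 : ℕ → ℕ → ℝ := fun i j =>
    (∫ ω', ((Z i j ω') ^ 2 - σ0 ^ 2) * indCen S C i j ω' ∂P) /
      (∫ ω', indCen S C i j ω' ∂P) with hc2
  set T : ℕ → ℕ → Ω → ℝ := fun i j ω =>
    b i j ω * ((Z i j ω) ^ 2 - σ0 ^ 2) * indObs S C i j ω +
      b i j ω * indCen S C i j ω * c2 i j with hT
  set Gi : ℕ → Ω → ℝ := fun i ω =>
    (⨆ j, |b i j ω * ((Z i j ω) ^ 2 - σ0 ^ 2)|) * (τ i ω : ℝ) with hGi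
  set u : ℕ → ℕ → ℝ := fun i j =>
    ∫ ω, indA S C i j ω * |b i j ω * ((Z i j ω) ^ 2 - σ0 ^ 2)| ∂P with hu
  -- pointwise facts
  have hIobs01 : ∀ i j ω, indObs S C i j ω = 0 ∨ indObs S C i j ω = 1 := by
    intro i j ω; unfold indObs; split <;> simp
  have hIcen01 : ∀ i j ω, indCen S C i j ω = 0 ∨ indCen S C i j ω = 1 := by
    intro i j ω; unfold indCen; split <;> simp
  have hIA01 : ∀ i j ω, indA S C i j ω = 0 ∨ indA S C i j ω = 1 := by
    intro i j ω; unfold indA; split <;> simp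
  have hnrm_sup : ∀ i j ω, |b i j ω * ((Z i j ω) ^ 2 - σ0 ^ 2)| ≤
      ⨆ j, |b i j ω * ((Z i j ω) ^ 2 - σ0 ^ 2)| :=
    fun i j ω => le_ciSup (hbd2 i ω) j
  have hsup_nonneg : ∀ i ω, 0 ≤ ⨆ j, |b i j ω * ((Z i j ω) ^ 2 - σ0 ^ 2)| :=
    fun i ω => (abs_nonneg _).trans (hnrm_sup i 0 ω)
  have htau1 : ∀ i ω, (1:ℝ) ≤ (τ i ω : ℝ) := by
    intro i ω; exact_mod_cast (hτ i ω).1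
  have hnrm_Gi : ∀ i j ω, |b i j ω * ((Z i j ω) ^ 2 - σ0 ^ 2)| ≤ Gi i ω := by
    intro i j ω
    calc |b i j ω * ((Z i j ω) ^ 2 - σ0 ^ 2)|
        ≤ ⨆ j, |b i j ω * ((Z i j ω) ^ 2 - σ0 ^ 2)| := hnrm_sup i j ω
      _ = (⨆ j, |b i j ω * ((Z i j ω) ^ 2 - σ0 ^ 2)|) * 1 := (mul_one _).symm
      _ ≤ Gi i ω := by
          rw [hGi]
          exact mul_le_mul_of_nonneg_left (htau1 i ω) (hsup_nonneg i ω)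
  have hGi_nonneg : ∀ i ω, 0 ≤ Gi i ω := fun i ω =>
    mul_nonneg (hsup_nonneg i ω) (by positivity)
  -- measurability
  have hZm : ∀ i j, 1 ≤ j → Measurable (Z i j) := fun i j hj =>
    ((hZmeas i j hj).mono ((𝒢 i).le j)).measurable
  have hbm : ∀ i j, 1 ≤ j → Measurable (b i j) := fun i j hj =>
    ((hbmeas i j hj).mono ((𝒢 i).le (j - 1))).measurable
  have hQm : ∀ i j, 1 ≤ j → Measurable (Q i j) := fun i j hj =>
    ((hZm i j hj).pow_const 2).sub measurable_const
  have hIobsM : ∀ i j, Measurable (indObs S C i j) := by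
    intro i j
    exact Measurable.ite (measurableSet_le (hSmeas i j) (hCmeas i))
      measurable_const measurable_const
  have hcenSet : ∀ i j, MeasurableSet {ω | S i (j-1) ω < C i ω ∧ C i ω < S i j ω} := by
    intro i j
    rw [Set.setOf_and]
    exact (measurableSet_lt (hSmeas i (j-1)) (hCmeas i)).inter
      (measurableSet_lt (hCmeas i) (hSmeas i j))
  have hIcenM : ∀ i j, Measurable (indCen S C i j) := by
    intro i j
    exact Measurable.ite (hcenSet i j) measurable_const measurable_const
  have hIAM : ∀ i j, Measurable (indA S C i j) := by
    intro i j
    exact Measurable.ite (measurableSet_lt (hSmeas i (j-1)) (hCmeas i))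
      measurable_const measurable_const
  -- integrability of Q
  have hQint : ∀ i j, 1 ≤ j → Integrable (Q i j) P := by
    intro i j hj
    exact (hZL2 i j hj).sub (integrable_const _)
  -- conditional moment of Q
  have hQcond : ∀ i j, 1 ≤ j → P[Q i j|𝒢 i (j-1)] =ᵐ[P] fun _ => 0 := by
    intro i j hj
    have h1 : P[Q i j|𝒢 i (j-1)] =ᵐ[P]
        P[fun ω => (Z i j ω) ^ 2|𝒢 i (j-1)] - P[fun _ => σ0 ^ 2|𝒢 i (j-1)] :=
      condExp_sub (hZL2 i j hj) (integrable_const _) _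
    have h2 : P[fun _ : Ω => σ0 ^ 2|𝒢 i (j-1)] = fun _ => σ0 ^ 2 :=
      condExp_const ((𝒢 i).le (j-1)) _
    filter_upwards [h1, hZ2cond i j hj] with ω hω1 hω2
    rw [hω1]
    simp only [Pi.sub_apply, h2, hω2]
    ring
  -- obsSigma facts
  have hOle : ∀ i, obsSigmaS S C b i ≤ m0 := by
    intro i
    refine iSup_le fun j => iSup_le fun hj => sup_le ?_ ?_
    · exact Measurable.comap_le ((hIcenM i j).mul (hbm i j hj))
    · exact (hIcenM i j).comap_le
  have hOsm : ∀ i j, 1 ≤ j →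
      StronglyMeasurable[obsSigmaS S C b i] (fun ω => indCen S C i j ω * b i j ω) := by
    intro i j hj
    have hle : MeasurableSpace.comap (fun ω => indCen S C i j ω * b i j ω)
        inferInstance ≤ obsSigmaS S C b i := by
      refine le_trans le_sup_left (le_trans (le_iSup (fun _ : 1 ≤ j =>
        (MeasurableSpace.comap (fun ω => indCen S C i j ω * b i j ω) inferInstance ⊔
          MeasurableSpace.comap (indCen S C i j) inferInstance)) hj) ?_)
      exact le_iSup (fun j => ⨆ _ : 1 ≤ j,
        (MeasurableSpace.comap (fun ω => indCen S C i j ω * b i j ω) inferInstance ⊔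
          MeasurableSpace.comap (indCen S C i j) inferInstance)) j
    exact (Measurable.mono (measurable_iff_comap_le.mpr le_rfl) hle le_rfl).stronglyMeasurable
  have hcen_abs_eq : ∀ i j ω, |indCen S C i j ω * b i j ω| =
      indCen S C i j ω * |b i j ω| := by
    intro i j ω
    rcases hIcen01 i j ω with h | h <;> rw [abs_mul, h] <;> simp
  have hOsm_abs : ∀ i j, 1 ≤ j →
      StronglyMeasurable[obsSigmaS S C b i] (fun ω => indCen S C i j ω * |b i j ω|) := by
    intro i j hj
    have heq : (fun ω => indCen S C i j ω * |b i j ω|) =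
        fun ω => ‖indCen S C i j ω * b i j ω‖ := by
      funext ω; rw [Real.norm_eq_abs, hcen_abs_eq]
    rw [heq]
    exact (hOsm i j hj).norm
  -- conditional expectation chain
  have hW : ∀ i j, 1 ≤ j →
      (fun ω => indCen S C i j ω * (P[Q i j|obsSigmaS S C b i]) ω) =ᵐ[P]
        fun ω => indCen S C i j ω * c2 i j := by
    intro i j hj
    have hIind : indCen S C i j =
        ({ω | S i (j-1) ω < C i ω ∧ C i ω < S i j ω} : Set Ω).indicator (fun _ => (1:ℝ)) := by
      funext ω
      by_cases h : S i (j-1) ω < C i ω ∧ C i ω < S i j ω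
      · rw [indCen, if_pos h]
        exact (Set.indicator_of_mem
          (s := {ω | S i (j-1) ω < C i ω ∧ C i ω < S i j ω}) (a := ω)
          h (fun _ => (1:ℝ))).symm
      · rw [indCen, if_neg h]
        exact (Set.indicator_of_notMem
          (s := {ω | S i (j-1) ω < C i ω ∧ C i ω < S i j ω}) (a := ω)
          (fun hc => h hc) (fun _ => (1:ℝ))).symm
    have hA : P[Q i j|obsSigmaS S C b i] =ᵐ[P]
        fun ω => (P[fun ω' => (Z i j ω') ^ 2|obsSigmaS S C b i]) ω - σ0 ^ 2 := by
      have h1 : P[Q i j|obsSigmaS S C b i] =ᵐ[P]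
          P[fun ω => (Z i j ω) ^ 2|obsSigmaS S C b i] -
            P[fun _ => σ0 ^ 2|obsSigmaS S C b i] :=
        condExp_sub (hZL2 i j hj) (integrable_const _) _
      have h2 : P[fun _ : Ω => σ0 ^ 2|obsSigmaS S C b i] = fun _ => σ0 ^ 2 :=
        condExp_const (hOle i) _
      filter_upwards [h1] with ω hω1
      rw [hω1]
      simp only [Pi.sub_apply, h2]
    have hC : P[Q i j|MeasurableSpace.comap (indCen S C i j) inferInstance] =ᵐ[P]
        fun ω => (P[fun ω' => (Z i j ω') ^ 2|
          MeasurableSpace.comap (indCen S C i j) inferInstance]) ω - σ0 ^ 2 := by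
      have hm' : MeasurableSpace.comap (indCen S C i j) inferInstance ≤ m0 :=
        (hIcenM i j).comap_le
      have h1 : P[Q i j|MeasurableSpace.comap (indCen S C i j) inferInstance] =ᵐ[P]
          P[fun ω => (Z i j ω) ^ 2|MeasurableSpace.comap (indCen S C i j) inferInstance] -
            P[fun _ => σ0 ^ 2|MeasurableSpace.comap (indCen S C i j) inferInstance] :=
        condExp_sub (hZL2 i j hj) (integrable_const _) _
      have h2 : P[fun _ : Ω => σ0 ^ 2|
          MeasurableSpace.comap (indCen S C i j) inferInstance] = fun _ => σ0 ^ 2 :=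
        condExp_const hm' _
      filter_upwards [h1] with ω hω1
      rw [hω1]
      simp only [Pi.sub_apply, h2]
    have hD := helper_condexp_indicator (P := P) (hcenSet i j) hIind (hQint i j hj)
    filter_upwards [hA, hBb i j hj, hC, hD] with ω h1 h2 h3 h4
    calc indCen S C i j ω * (P[Q i j|obsSigmaS S C b i]) ω
        = indCen S C i j ω *
            ((P[fun ω' => (Z i j ω') ^ 2|obsSigmaS S C b i]) ω - σ0 ^ 2) := by rw [h1]
      _ = indCen S C i j ω * (P[fun ω' => (Z i j ω') ^ 2|obsSigmaS S C b i]) ω -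
            indCen S C i j ω * σ0 ^ 2 := by ring
      _ = indCen S C i j ω * (P[fun ω' => (Z i j ω') ^ 2|
            MeasurableSpace.comap (indCen S C i j) inferInstance]) ω -
            indCen S C i j ω * σ0 ^ 2 := by rw [h2]
      _ = indCen S C i j ω * ((P[fun ω' => (Z i j ω') ^ 2|
            MeasurableSpace.comap (indCen S C i j) inferInstance]) ω - σ0 ^ 2) := by ring
      _ = indCen S C i j ω *
            (P[Q i j|MeasurableSpace.comap (indCen S C i j) inferInstance]) ω := by rw [h3]
      _ = indCen S C i j ω * c2 i j := h4
  -- generic bound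
  have hbound_gen : ∀ i j (ω : Ω) (a : ℝ), (a = 0 ∨ a = 1) →
      ‖a * b i j ω * Q i j ω‖ ≤
        (⨆ j, |b i j ω * ((Z i j ω) ^ 2 - σ0 ^ 2)|) * (τ i ω : ℝ) := by
    intro i j ω a ha
    have h01 : |a| ≤ 1 := by rcases ha with h|h <;> simp [h]
    calc ‖a * b i j ω * Q i j ω‖ = |a| * |b i j ω * Q i j ω| := by
          rw [Real.norm_eq_abs, mul_assoc, abs_mul]
      _ ≤ 1 * |b i j ω * Q i j ω| := mul_le_mul_of_nonneg_right h01 (abs_nonneg _)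
      _ = |b i j ω * ((Z i j ω) ^ 2 - σ0 ^ 2)| := one_mul _
      _ ≤ (⨆ j, |b i j ω * ((Z i j ω) ^ 2 - σ0 ^ 2)|) * (τ i ω : ℝ) := hnrm_Gi i j ω
  -- integrability batch
  have hIAgX : ∀ i j, 1 ≤ j →
      Integrable (fun ω => indA S C i j ω * b i j ω * Q i j ω) P := by
    intro i j hj
    refine Integrable.mono' (hCond5b i)
      (((hIAM i j).mul (hbm i j hj)).mul (hQm i j hj)).aestronglyMeasurable
      (Eventually.of_forall fun ω => ?_)
    exact hbound_gen i j ω _ (hIA01 i j ω)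
  have hIcgX : ∀ i j, 1 ≤ j →
      Integrable (fun ω => indCen S C i j ω * b i j ω * Q i j ω) P := by
    intro i j hj
    refine Integrable.mono' (hCond5b i)
      (((hIcenM i j).mul (hbm i j hj)).mul (hQm i j hj)).aestronglyMeasurable
      (Eventually.of_forall fun ω => ?_)
    exact hbound_gen i j ω _ (hIcen01 i j ω)
  have hIcg_int : ∀ i j, 1 ≤ j →
      Integrable (fun ω => indCen S C i j ω * b i j ω) P := by
    intro i j hj
    exact (hbcen i j hj).congr (Eventually.of_forall fun ω => by
      show b i j ω * indCen S C i j ω = indCen S C i j ω * b i j ω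
      ring)
  have hIcen_abs : ∀ i j, 1 ≤ j →
      Integrable (fun ω => indCen S C i j ω * |b i j ω|) P := by
    intro i j hj
    refine (hIcg_int i j hj).abs.congr (Eventually.of_forall fun ω => ?_)
    show |indCen S C i j ω * b i j ω| = indCen S C i j ω * |b i j ω|
    exact hcen_abs_eq i j ω
  have hIcen_absX : ∀ i j, 1 ≤ j →
      Integrable (fun ω => indCen S C i j ω * |b i j ω| * Q i j ω) P := by
    intro i j hj
    refine Integrable.mono' (hCond5b i)
      (((hIcenM i j).mul (hbm i j hj).abs).mul (hQm i j hj)).aestronglyMeasurable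
      (Eventually.of_forall fun ω => ?_)
    have heq : ‖indCen S C i j ω * |b i j ω| * Q i j ω‖ =
        ‖indCen S C i j ω * b i j ω * Q i j ω‖ := by
      rw [Real.norm_eq_abs, Real.norm_eq_abs, abs_mul, abs_mul, abs_mul, abs_mul, abs_abs]
    rw [heq]
    exact hbound_gen i j ω _ (hIcen01 i j ω)
  -- strongly measurable for the filtration
  have hIA_sm : ∀ i j, 1 ≤ j →
      StronglyMeasurable[𝒢 i (j-1)] (fun ω => indA S C i j ω * b i j ω) := by
    intro i j hj
    have h1 : StronglyMeasurable[𝒢 i (j-1)] (indA S C i j) := by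
      have heq : indA S C i j =
          ({ω | S i (j-1) ω < C i ω} : Set Ω).indicator (fun _ => (1:ℝ)) := by
        funext ω
        by_cases h : S i (j-1) ω < C i ω
        · rw [indA, if_pos h]
          exact (Set.indicator_of_mem (s := {ω | S i (j-1) ω < C i ω}) (a := ω)
            h (fun _ => (1:ℝ))).symm
        · rw [indA, if_neg h]
          exact (Set.indicator_of_notMem (s := {ω | S i (j-1) ω < C i ω}) (a := ω)
            (fun hc => h hc) (fun _ => (1:ℝ))).symm
      rw [heq]
      exact stronglyMeasurable_const.indicator (hSC i j hj)
    exact h1.mul (hbmeas i j hj)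
  -- per-term integrability
  have hTint : ∀ i j, 1 ≤ j → Integrable (T i j) P := by
    intro i j hj
    have hA : Integrable (fun ω => b i j ω * ((Z i j ω) ^ 2 - σ0 ^ 2) *
        indObs S C i j ω) P := by
      refine Integrable.mono' (hCond5b i)
        (((hbm i j hj).mul (hQm i j hj)).mul (hIobsM i j)).aestronglyMeasurable
        (Eventually.of_forall fun ω => ?_)
      have heq : ‖b i j ω * ((Z i j ω) ^ 2 - σ0 ^ 2) * indObs S C i j ω‖ =
          ‖indObs S C i j ω * b i j ω * Q i j ω‖ := by
        rw [Real.norm_eq_abs, Real.norm_eq_abs]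
        show |b i j ω * ((Z i j ω) ^ 2 - σ0 ^ 2) * indObs S C i j ω| =
          |indObs S C i j ω * b i j ω * ((Z i j ω) ^ 2 - σ0 ^ 2)|
        ring_nf
      rw [heq]
      exact hbound_gen i j ω _ (hIobs01 i j ω)
    have hB : Integrable (fun ω => b i j ω * indCen S C i j ω * c2 i j) P := by
      refine ((hIcg_int i j hj).mul_const (c2 i j)).congr
        (Eventually.of_forall fun ω => ?_)
      show indCen S C i j ω * b i j ω * c2 i j = b i j ω * indCen S C i j ω * c2 i j
      ring
    exact hA.add hB
  -- per-term zero integral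
  have hTzero : ∀ i j, 1 ≤ j → ∫ ω, T i j ω ∂P = 0 := by
    intro i j hj
    have hkey := helper_key_term ((𝒢 i).le (j-1)) (hOle i)
      (fun ω => fact_split hSmono hj ω)
      (hIA_sm i j hj) (hQint i j hj) (hQcond i j hj)
      (hIAgX i j hj) (hOsm i j hj) (hIcg_int i j hj) (hIcgX i j hj)
      (hW i j hj)
    rw [← hkey]
    refine integral_congr_ae (Eventually.of_forall fun ω => ?_)
    show b i j ω * ((Z i j ω) ^ 2 - σ0 ^ 2) * indObs S C i j ω +
        b i j ω * indCen S C i j ω * c2 i j =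
      Q i j ω * indObs S C i j ω * b i j ω + indCen S C i j ω * b i j ω * c2 i j
    show b i j ω * ((Z i j ω) ^ 2 - σ0 ^ 2) * indObs S C i j ω +
        b i j ω * indCen S C i j ω * c2 i j =
      ((Z i j ω) ^ 2 - σ0 ^ 2) * indObs S C i j ω * b i j ω +
        indCen S C i j ω * b i j ω * c2 i j
    ring
  -- more integrability
  have hIA_nonneg : ∀ i j ω, 0 ≤ indA S C i j ω := by
    intro i j ω; rcases hIA01 i j ω with h|h <;> rw [h] <;> norm_num
  have hIcen_nonneg : ∀ i j ω, 0 ≤ indCen S C i j ω := by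
    intro i j ω; rcases hIcen01 i j ω with h|h <;> rw [h] <;> norm_num
  have hind_nrm_int : ∀ (I : ℕ → ℕ → Ω → ℝ), (∀ i j, Measurable (I i j)) →
      (∀ i j ω, I i j ω = 0 ∨ I i j ω = 1) → ∀ i j, 1 ≤ j →
      Integrable (fun ω => I i j ω * |b i j ω * ((Z i j ω) ^ 2 - σ0 ^ 2)|) P := by
    intro I hIM hI01 i j hj
    refine Integrable.mono' (hCond5b i)
      ((hIM i j).mul ((hbm i j hj).mul (hQm i j hj)).abs).aestronglyMeasurable
      (Eventually.of_forall fun ω => ?_)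
    rw [Real.norm_eq_abs, abs_mul, abs_abs]
    rcases hI01 i j ω with h|h <;> rw [h]
    · simpa [hGi, abs_mul] using hGi_nonneg i ω
    · rw [abs_one, one_mul]
      exact hnrm_Gi i j ω
  have hIobs_nrm := hind_nrm_int _ hIobsM hIobs01
  have hIcen_nrm := hind_nrm_int _ hIcenM hIcen01
  have hIA_nrm := hind_nrm_int _ hIAM hIA01
  -- the norm bound on each term
  have hTu : ∀ i j, 1 ≤ j → ∫ ω, ‖T i j ω‖ ∂P ≤ u i j := by
    intro i j hj
    have hptw : ∀ ω, ‖T i j ω‖ ≤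
        indObs S C i j ω * |b i j ω * ((Z i j ω) ^ 2 - σ0 ^ 2)| +
        |c2 i j| * (indCen S C i j ω * |b i j ω|) := by
      intro ω
      have e1 : |b i j ω * ((Z i j ω) ^ 2 - σ0 ^ 2) * indObs S C i j ω| =
          indObs S C i j ω * |b i j ω * ((Z i j ω) ^ 2 - σ0 ^ 2)| := by
        rw [abs_mul]
        rcases hIobs01 i j ω with h|h <;> rw [h] <;> simp
      have e2 : |b i j ω * indCen S C i j ω * c2 i j| =
          |c2 i j| * (indCen S C i j ω * |b i j ω|) := by
        rw [abs_mul, abs_mul]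
        rcases hIcen01 i j ω with h|h <;> rw [h] <;> simp <;> ring
      calc ‖T i j ω‖ ≤ |b i j ω * ((Z i j ω) ^ 2 - σ0 ^ 2) * indObs S C i j ω| +
          |b i j ω * indCen S C i j ω * c2 i j| := by
            rw [show T i j ω = b i j ω * ((Z i j ω) ^ 2 - σ0 ^ 2) * indObs S C i j ω +
              b i j ω * indCen S C i j ω * c2 i j from rfl, Real.norm_eq_abs]
            exact abs_add_le _ _
        _ = _ := by rw [e1, e2]
    have hint2 : Integrable (fun ω =>
        indObs S C i j ω * |b i j ω * ((Z i j ω) ^ 2 - σ0 ^ 2)| +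
        |c2 i j| * (indCen S C i j ω * |b i j ω|)) P :=
      (hIobs_nrm i j hj).add ((hIcen_abs i j hj).const_mul _)
    have hb1 : |c2 i j| * ∫ ω, indCen S C i j ω * |b i j ω| ∂P ≤
        ∫ ω, indCen S C i j ω * |b i j ω * ((Z i j ω) ^ 2 - σ0 ^ 2)| ∂P := by
      have h5 := helper_key_bound (hOle i) (hOsm_abs i j hj) (hIcen_abs i j hj)
        (hIcen_absX i j hj) (hQint i j hj) (hW i j hj)
      have h6 : |c2 i j| * ∫ ω, indCen S C i j ω * |b i j ω| ∂P =
          |c2 i j * ∫ ω, indCen S C i j ω * |b i j ω| ∂P| := by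
        rw [abs_mul, abs_of_nonneg (integral_nonneg fun ω =>
          mul_nonneg (hIcen_nonneg i j ω) (abs_nonneg _))]
      have h7 : ∫ ω, |indCen S C i j ω * |b i j ω| * Q i j ω| ∂P =
          ∫ ω, indCen S C i j ω * |b i j ω * ((Z i j ω) ^ 2 - σ0 ^ 2)| ∂P := by
        refine integral_congr_ae (Eventually.of_forall fun ω => ?_)
        show |indCen S C i j ω * |b i j ω| * Q i j ω| =
          indCen S C i j ω * |b i j ω * ((Z i j ω) ^ 2 - σ0 ^ 2)|
        rw [abs_mul, abs_mul, abs_abs]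
        rcases hIcen01 i j ω with h|h <;> rw [h] <;> simp [abs_mul, hQ]
      rw [h6, ← h7]
      exact h5
    calc ∫ ω, ‖T i j ω‖ ∂P
        ≤ ∫ ω, (indObs S C i j ω * |b i j ω * ((Z i j ω) ^ 2 - σ0 ^ 2)| +
            |c2 i j| * (indCen S C i j ω * |b i j ω|)) ∂P :=
          integral_mono (hTint i j hj).norm hint2 hptw
      _ = (∫ ω, indObs S C i j ω * |b i j ω * ((Z i j ω) ^ 2 - σ0 ^ 2)| ∂P) +
            |c2 i j| * ∫ ω, indCen S C i j ω * |b i j ω| ∂P := by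
          rw [integral_add (hIobs_nrm i j hj) ((hIcen_abs i j hj).const_mul _),
            integral_const_mul]
      _ ≤ (∫ ω, indObs S C i j ω * |b i j ω * ((Z i j ω) ^ 2 - σ0 ^ 2)| ∂P) +
            ∫ ω, indCen S C i j ω * |b i j ω * ((Z i j ω) ^ 2 - σ0 ^ 2)| ∂P :=
          add_le_add le_rfl hb1
      _ = ∫ ω, (indObs S C i j ω * |b i j ω * ((Z i j ω) ^ 2 - σ0 ^ 2)| +
            indCen S C i j ω * |b i j ω * ((Z i j ω) ^ 2 - σ0 ^ 2)|) ∂P :=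
          (integral_add (hIobs_nrm i j hj) (hIcen_nrm i j hj)).symm
      _ = u i j := by
          rw [hu]
          refine integral_congr_ae (Eventually.of_forall fun ω => ?_)
          show indObs S C i j ω * |b i j ω * ((Z i j ω) ^ 2 - σ0 ^ 2)| +
            indCen S C i j ω * |b i j ω * ((Z i j ω) ^ 2 - σ0 ^ 2)| =
            indA S C i j ω * |b i j ω * ((Z i j ω) ^ 2 - σ0 ^ 2)|
          rw [fact_split hSmono hj ω]
          ring
  -- summability of the bounds
  have husum : ∀ i, ∃ K, ∀ N,
      ∑ j ∈ Finset.range N, (if 1 ≤ j then u i j else 0) ≤ K := by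
    intro i
    refine ⟨∫ ω, Gi i ω ∂P, fun N => ?_⟩
    have hjint : ∀ j, Integrable
        (fun ω => if 1 ≤ j then indA S C i j ω * |b i j ω * ((Z i j ω) ^ 2 - σ0 ^ 2)|
          else 0) P := by
      intro j
      by_cases hj : 1 ≤ j
      · simp only [if_pos hj]; exact hIA_nrm i j hj
      · simp only [if_neg hj]; exact integrable_zero _ _ _
    calc ∑ j ∈ Finset.range N, (if 1 ≤ j then u i j else 0)
        = ∑ j ∈ Finset.range N, ∫ ω,
            (if 1 ≤ j then indA S C i j ω * |b i j ω * ((Z i j ω) ^ 2 - σ0 ^ 2)|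
              else 0) ∂P := by
          refine Finset.sum_congr rfl fun j _ => ?_
          by_cases hj : 1 ≤ j
          · simp only [if_pos hj, hu]
          · simp only [if_neg hj, integral_zero]
      _ = ∫ ω, ∑ j ∈ Finset.range N,
            (if 1 ≤ j then indA S C i j ω * |b i j ω * ((Z i j ω) ^ 2 - σ0 ^ 2)|
              else 0) ∂P :=
          (integral_finset_sum _ (fun j _ => hjint j)).symm
      _ ≤ ∫ ω, Gi i ω ∂P := by
          refine integral_mono (integrable_finset_sum _ (fun j _ => hjint j))
            (hCond5b i) (fun ω => ?_)
          calc ∑ j ∈ Finset.range N,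
              (if 1 ≤ j then indA S C i j ω * |b i j ω * ((Z i j ω) ^ 2 - σ0 ^ 2)| else 0)
              ≤ ∑ j ∈ Finset.range N,
                (if 1 ≤ j then indA S C i j ω else 0) *
                  (⨆ j, |b i j ω * ((Z i j ω) ^ 2 - σ0 ^ 2)|) := by
                refine Finset.sum_le_sum fun j _ => ?_
                by_cases hj : 1 ≤ j
                · simp only [if_pos hj]
                  exact mul_le_mul_of_nonneg_left (hnrm_sup i j ω) (hIA_nonneg i j ω)
                · simp only [if_neg hj, zero_mul, le_refl]
            _ = (∑ j ∈ Finset.range N, (if 1 ≤ j then indA S C i j ω else 0)) *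
                (⨆ j, |b i j ω * ((Z i j ω) ^ 2 - σ0 ^ 2)|) := by rw [Finset.sum_mul]
            _ ≤ (τ i ω : ℝ) * (⨆ j, |b i j ω * ((Z i j ω) ^ 2 - σ0 ^ 2)|) :=
                mul_le_mul_of_nonneg_right (fact_sum_indA hS0 hSmono hCpos hτ N ω)
                  (hsup_nonneg i ω)
            _ = Gi i ω := by rw [hGi]; ring
  -- vanishing beyond τ
  have hT0 : ∀ i j ω, 1 ≤ j → τ i ω < j → T i j ω = 0 := by
    intro i j ω hj h
    obtain ⟨h1, h2⟩ := fact_tau_lt hS0 hSmono hCpos hτ hj ω h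
    rw [hT]
    simp only [h1, h2, mul_zero, zero_mul, add_zero]
  have hmain := master_sum P τ T n hT0 hTint hTzero u hTu husum
  have hrw : ∀ ω, gObs2 P S C b Z σ0 τ n ω =
      ∑ i ∈ Finset.Icc 1 n, ∑ j ∈ Finset.Icc 1 (τ i ω), T i j ω := by
    intro ω
    rw [hT, hc2]
    rfl
  calc ∫ ω, gObs2 P S C b Z σ0 τ n ω ∂P
      = ∫ ω, ∑ i ∈ Finset.Icc 1 n, ∑ j ∈ Finset.Icc 1 (τ i ω), T i j ω ∂P :=
        integral_congr_ae (Eventually.of_forall hrw)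
    _ = 0 := hmain


/-- Proposition 2.2: under Condition 5 and conditions `(B_{f(θ₀)})`,
`(B_{b(η₀)})`, the observed estimating functions are unbiased at the true parameter. -/
theorem statement4
    {Ω : Type*} {m0 : MeasurableSpace Ω} (P : Measure Ω) [IsProbabilityMeasure P]
    {p : ℕ}
    (S : ℕ → ℕ → Ω → ℝ) (C : ℕ → Ω → ℝ)
    (f : ℕ → ℕ → Ω → EuclideanSpace ℝ (Fin p)) (Z : ℕ → ℕ → Ω → ℝ) (b : ℕ → ℕ → Ω → ℝ)
    (σ0 : ℝ) (𝒢 : ℕ → Filtration ℕ m0) (τ : ℕ → Ω → ℕ)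
    -- basic structure of the data
    (hS0 : ∀ i ω, S i 0 ω = 0)
    (hSmono : ∀ i ω, StrictMono fun j => S i j ω)
    (hCpos : ∀ i ω, 0 < C i ω)
    (hSmeas : ∀ i j, Measurable (S i j))
    (hCmeas : ∀ i, Measurable (C i))
    (hτ : ∀ i ω, 1 ≤ τ i ω ∧ C i ω ≤ S i (τ i ω) ω ∧ ∀ j, 1 ≤ j → j < τ i ω → S i j ω < C i ω)
    -- measurability with respect to the enlarged filtrations 𝓖_i
    (hfmeas : ∀ i j, 1 ≤ j → StronglyMeasurable[𝒢 i (j - 1)] (f i j))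
    (hbmeas : ∀ i j, 1 ≤ j → StronglyMeasurable[𝒢 i (j - 1)] (b i j))
    (hZmeas : ∀ i j, 1 ≤ j → StronglyMeasurable[𝒢 i j] (Z i j))
    (hSC : ∀ i j, 1 ≤ j → MeasurableSet[𝒢 i (j - 1)] {ω | S i (j - 1) ω < C i ω})
    -- conditional moments at the true parameter (model (1.2) + assumption (A))
    (hZcond : ∀ i j, 1 ≤ j → P[Z i j|𝒢 i (j - 1)] =ᵐ[P] fun _ => 0)
    (hZ2cond : ∀ i j, 1 ≤ j → P[fun ω => (Z i j ω) ^ 2|𝒢 i (j - 1)] =ᵐ[P] fun _ => σ0 ^ 2)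
    (hZL2 : ∀ i j, 1 ≤ j → Integrable (fun ω => (Z i j ω) ^ 2) P)
    -- Condition 5
    (hbd1 : ∀ i ω, BddAbove (Set.range fun j => ‖Z i j ω • f i j ω‖))
    (hbd2 : ∀ i ω, BddAbove (Set.range fun j => |b i j ω * ((Z i j ω) ^ 2 - σ0 ^ 2)|))
    (hCond5a : ∀ i, Integrable (fun ω => (⨆ j, ‖Z i j ω • f i j ω‖) * (τ i ω : ℝ)) P)
    (hCond5b : ∀ i,
      Integrable (fun ω => (⨆ j, |b i j ω * ((Z i j ω) ^ 2 - σ0 ^ 2)|) * (τ i ω : ℝ)) P)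
    -- integrability of the imputed terms
    (hfcen : ∀ i j, 1 ≤ j → Integrable (fun ω => indCen S C i j ω • f i j ω) P)
    (hbcen : ∀ i j, 1 ≤ j → Integrable (fun ω => b i j ω * indCen S C i j ω) P)
    -- condition (B_{f(θ₀)})
    (hBf : ∀ i j, 1 ≤ j →
      (fun ω => indCen S C i j ω * (P[Z i j|obsSigmaV S C f i]) ω) =ᵐ[P]
        fun ω =>
          indCen S C i j ω *
            (P[Z i j|MeasurableSpace.comap (indCen S C i j) inferInstance]) ω)
    -- condition (B_{b(η₀)})
    (hBb : ∀ i j, 1 ≤ j →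
      (fun ω => indCen S C i j ω * (P[fun ω' => (Z i j ω') ^ 2|obsSigmaS S C b i]) ω) =ᵐ[P]
        fun ω =>
          indCen S C i j ω *
            (P[fun ω' => (Z i j ω') ^ 2|
              MeasurableSpace.comap (indCen S C i j) inferInstance]) ω) :
    (∀ n, 1 ≤ n → ∫ ω, gObs1 P S C f Z τ n ω ∂P = 0) ∧
    (∀ n, 1 ≤ n → ∫ ω, gObs2 P S C b Z σ0 τ n ω ∂P = 0) := by
  constructor
  · exact part1 P S C f Z 𝒢 τ hS0 hSmono hCpos hSmeas hCmeas hτ hfmeas hZmeas hSC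
      hZcond hZL2 hbd1 hCond5a hfcen hBf
  · exact part2 P S C b Z σ0 𝒢 τ hS0 hSmono hCpos hSmeas hCmeas hτ hbmeas hZmeas hSC
      hZ2cond hZL2 hbd2 hCond5b hbcen hBb
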